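/- Suppose C(t) is nonempty and convex for every t ∈ [0,T], C is inner semicontinuous at every point of its graph (i.e., for every t ∈ [0,T], x ∈ C(t) and every open set U ⊆ H containing x, there exists a neighborhood V of t in [0,T] such that C(t') ∩ U ≠ ∅ for all t' ∈ V), and there exist positive constants c₁, c₂ such that ⟨A₁ x, x⟩ ≥ c₁‖x‖² − c₂ for every t ∈ [0,T] and every x ∈ C(t). Then for every u₀ ∈ C(0) there exists M > 0 such that every solution u of the sweeping process (P) with initial value u₀, with Bochner-integrable derivative v, satisfies ‖u(t)‖ ≤ M for all t ∈ [0,T] and ∫₀ᵀ ‖v(τ)‖ dτ ≤ M; i.e., the solution set Sol(P,u₀) is bounded in C⁰([0,T],H) and in W^{1,1}([0,T],H). -/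

import Mathlib

open MeasureTheory Set
open scoped RealInnerProductSpace

lemma sweep_aux_quad {c K L s : ℝ} (hc : 0 < c) (hK : 0 ≤ K) (hL : 0 ≤ L) (hs : 0 ≤ s)
    (h : c * s ^ 2 ≤ K * s + L) : s ≤ K / c + Real.sqrt (L / c) := by
  by_contra hlt
  push_neg at hlt
  set q := Real.sqrt (L / c) with hqdef
  have hq2 : q ^ 2 = L / c := Real.sq_sqrt (div_nonneg hL hc.le)
  have hqn : 0 ≤ q := Real.sqrt_nonneg _
  have hs0 : 0 < s := lt_of_le_of_lt (by positivity) hlt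
  have hqs : q < s := lt_of_le_of_lt (le_add_of_nonneg_left (by positivity)) hlt
  have hL' : L = c * q ^ 2 := by rw [hq2, mul_div_assoc', mul_div_cancel_left₀ _ hc.ne']
  have hKc : K / c * c = K := div_mul_cancel₀ K hc.ne'
  nlinarith [mul_lt_mul_of_pos_right hlt (mul_pos hc hs0),
    mul_le_mul_of_nonneg_left hqs.le hqn]

lemma sweep_aux_sel {H : Type*} [NormedAddCommGroup H]
    (T : ℝ) (C : ℝ → Set H)
    (hC : ∀ t ∈ Icc (0:ℝ) T, (C t).Nonempty)
    (hisc : ∀ t ∈ Icc (0:ℝ) T, ∀ x ∈ C t, ∀ U : Set H, IsOpen U → x ∈ U →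
      ∃ V ∈ nhdsWithin t (Icc (0:ℝ) T), ∀ t' ∈ V ∩ Icc (0:ℝ) T, (C t' ∩ U).Nonempty) :
    ∃ R > 0, ∀ t ∈ Icc (0:ℝ) T, ∃ z ∈ C t, ‖z‖ ≤ R := by
  have key : ∀ t ∈ Icc (0:ℝ) T, ∃ O : Set ℝ, ∃ r : ℝ, IsOpen O ∧ t ∈ O ∧ 0 ≤ r ∧
      ∀ t' ∈ O ∩ Icc 0 T, ∃ z ∈ C t', ‖z‖ ≤ r := by
    intro t ht
    obtain ⟨x, hx⟩ := hC t ht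
    obtain ⟨V, hV, hVp⟩ := hisc t ht x hx (Metric.ball x 1) Metric.isOpen_ball
      (Metric.mem_ball_self one_pos)
    rw [mem_nhdsWithin] at hV
    obtain ⟨O, hO, htO, hOV⟩ := hV
    refine ⟨O, ‖x‖ + 1, hO, htO, by positivity, ?_⟩
    intro t' ht'
    obtain ⟨z, hz, hzb⟩ := hVp t' ⟨hOV ⟨ht'.1, ht'.2⟩, ht'.2⟩
    refine ⟨z, hz, ?_⟩
    have hzx : ‖z - x‖ < 1 := mem_ball_iff_norm.mp hzb
    have : ‖z‖ ≤ ‖x‖ + ‖z - x‖ := by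
      calc ‖z‖ = ‖x + (z - x)‖ := by rw [add_sub_cancel]
        _ ≤ ‖x‖ + ‖z - x‖ := norm_add_le _ _
    linarith
  classical
  choose! O r hOopen htO hrnn hprop using key
  obtain ⟨F, hFsub, hFcov⟩ := isCompact_Icc.elim_nhds_subcover O
    (fun t ht => (hOopen t ht).mem_nhds (htO t ht))
  have hsum : 0 ≤ ∑ t ∈ F, r t := Finset.sum_nonneg fun s hs => hrnn s (hFsub s hs)
  refine ⟨(∑ t ∈ F, r t) + 1, by linarith, ?_⟩
  intro t' ht'
  obtain ⟨t, htF, ht'O⟩ := mem_iUnion₂.mp (hFcov ht')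
  obtain ⟨z, hz, hzr⟩ := hprop t (hFsub t htF) t' ⟨ht'O, ht'⟩
  refine ⟨z, hz, ?_⟩
  have : r t ≤ ∑ s ∈ F, r s :=
    Finset.single_le_sum (fun s hs => hrnn s (hFsub s hs)) htF
  linarith

/-- `u` (with Bochner-integrable derivative `v`) is a solution of the sweeping process (P)
with velocity constraint `C`, data `A₀, A₁, f`, and initial value `u₀` on `[0,T]`. -/
def SweepSol {H : Type*} [NormedAddCommGroup H] [InnerProductSpace ℝ H]
    (T : ℝ) (A₀ A₁ : H →L[ℝ] H) (f : ℝ → H) (C : ℝ → Set H)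
    (u₀ : H) (u v : ℝ → H) : Prop :=
  IntegrableOn v (Icc 0 T) ∧
  (∀ t ∈ Icc (0:ℝ) T, u t = u₀ + ∫ τ in (0:ℝ)..t, v τ) ∧
  (∀ᵐ t ∂(volume.restrict (Icc (0:ℝ) T)),
    v t ∈ C t ∧ ∀ z ∈ C t, 0 ≤ ⟪A₁ (v t) + A₀ (u t) - f t, z - v t⟫)

set_option maxHeartbeats 1000000 in
theorem boundedness_sol_inner_semicontinuous
    {H : Type*} [NormedAddCommGroup H] [InnerProductSpace ℝ H] [CompleteSpace H]
    (T : ℝ) (hT : 0 < T) (A₀ A₁ : H →L[ℝ] H)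
    (hA₀sym : ∀ x y : H, ⟪A₀ x, y⟫ = ⟪x, A₀ y⟫)
    (hA₁sym : ∀ x y : H, ⟪A₁ x, y⟫ = ⟪x, A₁ y⟫)
    (hA₀pos : ∀ x : H, 0 ≤ ⟪A₀ x, x⟫)
    (hA₁pos : ∀ x : H, 0 ≤ ⟪A₁ x, x⟫)
    (f : ℝ → H) (hf : ContinuousOn f (Icc 0 T))
    (C : ℝ → Set H)
    (hC : ∀ t ∈ Icc (0:ℝ) T, (C t).Nonempty ∧ Convex ℝ (C t))
    (hisc : ∀ t ∈ Icc (0:ℝ) T, ∀ x ∈ C t, ∀ U : Set H, IsOpen U → x ∈ U →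
      ∃ V ∈ nhdsWithin t (Icc (0:ℝ) T), ∀ t' ∈ V ∩ Icc (0:ℝ) T, (C t' ∩ U).Nonempty)
    (c₁ c₂ : ℝ) (hc₁ : 0 < c₁) (hc₂ : 0 < c₂)
    (hcoer : ∀ t ∈ Icc (0:ℝ) T, ∀ x ∈ C t, c₁ * ‖x‖ ^ 2 - c₂ ≤ ⟪A₁ x, x⟫) :
    ∀ u₀ ∈ C 0, ∃ M > (0:ℝ), ∀ u v : ℝ → H, SweepSol T A₀ A₁ f C u₀ u v →
      (∀ t ∈ Icc (0:ℝ) T, ‖u t‖ ≤ M) ∧ (∫ τ in Icc (0:ℝ) T, ‖v τ‖) ≤ M := by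
  intro u₀ hu₀
  obtain ⟨R, hR, hsel⟩ := sweep_aux_sel T C (fun t ht => (hC t ht).1) hisc
  obtain ⟨F₀, hF₀⟩ := isCompact_Icc.exists_bound_of_continuousOn hf
  set F : ℝ := max F₀ 0 with hFdef
  have hF : 0 ≤ F := le_max_right _ _
  have hFb : ∀ t ∈ Icc (0:ℝ) T, ‖f t‖ ≤ F := fun t ht => le_max_of_le_left (hF₀ t ht)
  set q : ℝ := Real.sqrt c₁ with hqdef
  have hq : 0 < q := Real.sqrt_pos.mpr hc₁
  set b₀ : ℝ := 1/c₁ + R/(2*q) with hb₀def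
  have hb₀ : 0 < b₀ := by positivity
  have h1c₂ : 0 < 1 + c₂ := by linarith
  set a₀ : ℝ := R*‖A₁‖/c₁ + (1+c₂)/(2*q) with ha₀def
  have ha₀ : 0 < a₀ := add_pos_of_nonneg_of_pos (by positivity) (div_pos h1c₂ (by positivity))
  set a : ℝ := a₀ + b₀*(‖A₀‖*‖u₀‖ + F) with hadef
  have ha : 0 < a := add_pos_of_pos_of_nonneg ha₀ (by positivity)
  set b : ℝ := b₀*‖A₀‖ + 1 with hbdef
  have hb : 0 < b := by positivity
  set n : ℕ := ⌈2*b*T⌉₊ + 1 with hndef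
  have hn0 : (0:ℝ) < n := by positivity
  set δ : ℝ := T / n with hδdef
  have hδ : 0 < δ := by positivity
  have hnδ : (n:ℝ) * δ = T := by rw [hδdef, mul_div_assoc', mul_div_cancel_left₀ _ hn0.ne']
  have hn1 : (1:ℝ) ≤ (n:ℝ) := by
    rw [hndef]; exact_mod_cast Nat.succ_le_succ (Nat.zero_le _)
  have hδT : δ ≤ T := by
    rw [hδdef, div_le_iff₀ hn0]
    nlinarith
  have hδb : b * δ ≤ 1/2 := by
    have h2bT : 2*b*T ≤ (n:ℝ) := by
      have := Nat.le_ceil (2*b*T)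
      have h1 : (⌈2*b*T⌉₊ : ℝ) ≤ (n:ℝ) := by exact_mod_cast Nat.le_succ _
      linarith
    rw [hδdef, ← mul_div_assoc, div_le_iff₀ hn0]
    nlinarith [h2bT]
  set S : ℝ := 2^n * (2*a*T) with hSdef
  have hS : 0 < S := by positivity
  clear_value F q b₀ a₀ a b n δ S
  refine ⟨‖u₀‖ + S + 1, by positivity, ?_⟩
  rintro u v ⟨hv, hu, hvi⟩
  set w : ℝ → ℝ := fun t => ∫ τ in (0:ℝ)..t, ‖v τ‖ with hwdef
  clear_value w
  have hvn : IntegrableOn (fun τ => ‖v τ‖) (Icc 0 T) := hv.norm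
  have hii : ∀ s t : ℝ, s ∈ Icc (0:ℝ) T → t ∈ Icc (0:ℝ) T →
      IntervalIntegrable (fun τ => ‖v τ‖) volume s t := by
    intro s t hs ht
    refine (hvn.mono_set ?_).intervalIntegrable
    rw [show Icc (0:ℝ) T = uIcc 0 T from (uIcc_of_le hT.le).symm] at hs ht ⊢
    exact uIcc_subset_uIcc hs ht
  have h0T : (0:ℝ) ∈ Icc (0:ℝ) T := ⟨le_refl _, hT.le⟩
  have hTT : T ∈ Icc (0:ℝ) T := ⟨hT.le, le_refl _⟩
  have hwadd : ∀ s t : ℝ, s ∈ Icc (0:ℝ) T → t ∈ Icc (0:ℝ) T →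
      w t = w s + ∫ τ in s..t, ‖v τ‖ := by
    intro s t hs ht
    have := intervalIntegral.integral_add_adjacent_intervals (hii 0 s h0T hs) (hii s t hs ht)
    simp only [hwdef]
    linarith
  have hmono : ∀ s t : ℝ, s ∈ Icc (0:ℝ) T → t ∈ Icc (0:ℝ) T → s ≤ t → w s ≤ w t := by
    intro s t hs ht hst
    rw [hwadd s t hs ht]
    have : 0 ≤ ∫ τ in s..t, ‖v τ‖ :=
      intervalIntegral.integral_nonneg hst (fun x _ => norm_nonneg _)
    linarith
  have hwnn : ∀ t ∈ Icc (0:ℝ) T, 0 ≤ w t := by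
    intro t ht
    simp only [hwdef]
    exact intervalIntegral.integral_nonneg ht.1 (fun x _ => norm_nonneg _)
  have hub : ∀ t ∈ Icc (0:ℝ) T, ‖u t‖ ≤ ‖u₀‖ + w t := by
    intro t ht
    rw [hu t ht]
    refine le_trans (norm_add_le _ _) ?_
    have := intervalIntegral.norm_integral_le_integral_norm (f := v) (μ := volume) ht.1
    simp only [hwdef]
    linarith
  -- key pointwise a.e. bound
  have hae : ∀ᵐ t ∂(volume.restrict (Icc (0:ℝ) T)), ‖v t‖ ≤ a + b * w t := by
    filter_upwards [hvi, ae_restrict_mem measurableSet_Icc] with t hVI ht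
    obtain ⟨z, hzC, hzR⟩ := hsel t ht
    set s : ℝ := ‖v t‖ with hsd
    set B : ℝ := ‖A₀ (u t)‖ + ‖f t‖ with hBd
    have hBnn : 0 ≤ B := by positivity
    have hp : ⟪A₁ (v t) + A₀ (u t) - f t, v t⟫ ≤ ⟪A₁ (v t) + A₀ (u t) - f t, z⟫ := by
      have h0 := hVI.2 z hzC
      rw [inner_sub_right] at h0
      linarith
    have hpn : ‖A₁ (v t) + A₀ (u t) - f t‖ ≤ ‖A₁‖ * s + B := by
      calc ‖A₁ (v t) + A₀ (u t) - f t‖ ≤ ‖A₁ (v t) + A₀ (u t)‖ + ‖f t‖ := norm_sub_le _ _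
      _ ≤ ‖A₁ (v t)‖ + ‖A₀ (u t)‖ + ‖f t‖ := by linarith [norm_add_le (A₁ (v t)) (A₀ (u t))]
      _ ≤ ‖A₁‖ * s + B := by
          have := A₁.le_opNorm (v t)
          simp only [hBd]
          linarith
    have hpz : ⟪A₁ (v t) + A₀ (u t) - f t, z⟫ ≤ (‖A₁‖ * s + B) * R := by
      calc ⟪A₁ (v t) + A₀ (u t) - f t, z⟫ ≤ ‖A₁ (v t) + A₀ (u t) - f t‖ * ‖z‖ :=
            real_inner_le_norm _ _
      _ ≤ (‖A₁‖ * s + B) * R :=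
          mul_le_mul hpn hzR (norm_nonneg z) (by positivity)
    have hexp : ⟪A₁ (v t) + A₀ (u t) - f t, v t⟫
        = ⟪A₁ (v t), v t⟫ + ⟪A₀ (u t), v t⟫ - ⟪f t, v t⟫ := by
      rw [inner_sub_left, inner_add_left]
    have h2 := abs_le.mp (abs_real_inner_le_norm (A₀ (u t)) (v t))
    have h3 := abs_le.mp (abs_real_inner_le_norm (f t) (v t))
    have hcs := hcoer t ht (v t) hVI.1
    have e1 : ⟪A₁ (v t), v t⟫ ≤ (‖A₁‖ * s + B) * R + ‖A₀ (u t)‖ * s + ‖f t‖ * s := by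
      linarith [hp, hpz, h2.1, h2.2, h3.1, h3.2]
    have hquad : c₁ * s^2 ≤ (R*‖A₁‖ + B) * s + (c₂ + R*B) := by
      simp only [hBd] at e1 ⊢
      nlinarith [hcs, e1]
    have hroot := sweep_aux_quad hc₁ (by positivity) (by positivity) (norm_nonneg _) hquad
    have hLnn : (0:ℝ) ≤ c₂ + R*B := by positivity
    have hsqrt : Real.sqrt ((c₂ + R*B)/c₁) ≤ (1 + (c₂ + R*B))/(2*q) := by
      rw [Real.sqrt_div hLnn, ← hqdef]
      rw [div_le_div_iff₀ hq (by positivity)]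
      have hs2 : Real.sqrt (c₂ + R*B) ^ 2 = c₂ + R*B := Real.sq_sqrt hLnn
      nlinarith [Real.sqrt_nonneg (c₂ + R*B), sq_nonneg (Real.sqrt (c₂ + R*B) - 1)]
    have hcomb : (R*‖A₁‖ + B)/c₁ + (1 + (c₂ + R*B))/(2*q) = a₀ + b₀*B := by
      rw [ha₀def, hb₀def]
      field_simp
      ring
    have hsB : s ≤ a₀ + b₀ * B := by
      rw [← hcomb]; linarith
    have hBb : B ≤ ‖A₀‖ * ‖u t‖ + F := add_le_add (A₀.le_opNorm (u t)) (hFb t ht)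
    have huw : ‖u t‖ ≤ ‖u₀‖ + w t := hub t ht
    have hwt : 0 ≤ w t := hwnn t ht
    have hstep1 : b₀ * B ≤ b₀ * (‖A₀‖ * ‖u t‖ + F) :=
      mul_le_mul_of_nonneg_left hBb hb₀.le
    have hstep2 : ‖A₀‖ * ‖u t‖ ≤ ‖A₀‖ * (‖u₀‖ + w t) :=
      mul_le_mul_of_nonneg_left huw (norm_nonneg _)
    have hstep3 : b₀ * (‖A₀‖ * ‖u t‖ + F) ≤ b₀ * (‖A₀‖ * (‖u₀‖ + w t) + F) := by
      apply mul_le_mul_of_nonneg_left _ hb₀.le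
      linarith
    have : b₀ * (‖A₀‖ * (‖u₀‖ + w t) + F) = b₀*(‖A₀‖*‖u₀‖ + F) + (b₀*‖A₀‖) * w t := by ring
    simp only [hadef, hbdef]
    linarith [hsB, hstep1, hstep3, hwt, mul_nonneg hb₀.le (norm_nonneg A₀)]
  -- discrete Gronwall on the grid
  have hgrid : ∀ k : ℕ, k ≤ n → ((k:ℝ) * δ) ∈ Icc (0:ℝ) T := by
    intro k hk
    constructor
    · positivity
    · rw [← hnδ]
      have : (k:ℝ) ≤ (n:ℝ) := by exact_mod_cast hk
      nlinarith
  have key : ∀ k : ℕ, k ≤ n → w ((k:ℝ) * δ) ≤ ((2:ℝ)^k - 1) * (2*a*δ) := by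
    intro k
    induction k with
    | zero =>
      intro _
      simp only [Nat.cast_zero, zero_mul, pow_zero, sub_self]
      simp [hwdef]
    | succ k ih =>
      intro hk1
      have hk : k ≤ n := Nat.le_of_succ_le hk1
      have h1 := ih hk
      have ht0 : ((k:ℝ) * δ) ∈ Icc (0:ℝ) T := hgrid k hk
      have ht1 : (((k+1:ℕ)):ℝ) * δ ∈ Icc (0:ℝ) T := hgrid (k+1) hk1
      have ht01 : (k:ℝ) * δ ≤ ((k+1:ℕ):ℝ) * δ := by
        push_cast
        nlinarith
      have hwt1 : 0 ≤ w (((k+1:ℕ):ℝ) * δ) := hwnn _ ht1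
      have hint : ∫ τ in ((k:ℝ)*δ)..(((k+1:ℕ):ℝ)*δ), ‖v τ‖
          ≤ δ * (a + b * w (((k+1:ℕ):ℝ)*δ)) := by
        rw [intervalIntegral.integral_of_le ht01]
        have hsub : Ioc ((k:ℝ)*δ) (((k+1:ℕ):ℝ)*δ) ⊆ Icc (0:ℝ) T := fun τ hτ =>
          ⟨le_trans ht0.1 hτ.1.le, le_trans hτ.2 ht1.2⟩
        have haeIoc : ∀ᵐ τ ∂(volume.restrict (Ioc ((k:ℝ)*δ) (((k+1:ℕ):ℝ)*δ))),
            ‖v τ‖ ≤ a + b * w (((k+1:ℕ):ℝ)*δ) := by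
          filter_upwards [ae_restrict_of_ae_restrict_of_subset hsub hae,
            ae_restrict_mem measurableSet_Ioc] with τ hτ1 hτ2
          have hmw : w τ ≤ w (((k+1:ℕ):ℝ)*δ) := hmono τ _ (hsub hτ2) ht1 hτ2.2
          nlinarith
        calc ∫ τ in Ioc ((k:ℝ)*δ) (((k+1:ℕ):ℝ)*δ), ‖v τ‖
            ≤ ∫ _ in Ioc ((k:ℝ)*δ) (((k+1:ℕ):ℝ)*δ), (a + b * w (((k+1:ℕ):ℝ)*δ)) :=
              integral_mono_ae (hvn.mono_set hsub)
                (integrableOn_const measure_Ioc_lt_top.ne) haeIoc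
        _ = δ * (a + b * w (((k+1:ℕ):ℝ)*δ)) := by
            rw [setIntegral_const, measureReal_def, Real.volume_Ioc, smul_eq_mul]
            congr 1
            rw [ENNReal.toReal_ofReal (by push_cast; nlinarith)]
            push_cast
            ring
      have hadd := hwadd ((k:ℝ)*δ) (((k+1:ℕ):ℝ)*δ) ht0 ht1
      have hhalf : b * δ * w (((k+1:ℕ):ℝ)*δ) ≤ (1/2) * w (((k+1:ℕ):ℝ)*δ) :=
        mul_le_mul_of_nonneg_right hδb hwt1
      have hstep : w (((k+1:ℕ):ℝ)*δ) ≤ 2 * w ((k:ℝ)*δ) + 2*a*δ := by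
        linarith [hint, hadd, hhalf, hwt1]
      have h2k : ((2:ℝ)^(k+1) - 1) * (2*a*δ) = 2*(((2:ℝ)^k - 1) * (2*a*δ)) + 2*a*δ := by
        rw [pow_succ]; ring
      rw [h2k]
      linarith [hstep, h1]
  -- conclusion
  have hwT : w T ≤ S := by
    have hkey := key n le_rfl
    rw [hnδ] at hkey
    have h2n : (1:ℝ) ≤ 2^n := one_le_pow₀ (by norm_num)
    have h3 : 2*a*δ ≤ 2*a*T := by
      have := mul_le_mul_of_nonneg_left hδT (by positivity : (0:ℝ) ≤ 2*a)
      linarith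
    have h4 : ((2:ℝ)^n - 1) * (2*a*δ) ≤ 2^n * (2*a*T) :=
      calc ((2:ℝ)^n - 1) * (2*a*δ) ≤ 2^n * (2*a*δ) :=
            mul_le_mul_of_nonneg_right (by linarith) (by positivity)
      _ ≤ 2^n * (2*a*T) := mul_le_mul_of_nonneg_left h3 (by positivity)
    rw [hSdef]
    linarith
  constructor
  · intro t ht
    have h1 := hub t ht
    have h2 := hmono t T ht hTT ht.2
    linarith
  · have : (∫ τ in Icc (0:ℝ) T, ‖v τ‖) = w T := by
      simp only [hwdef]
      rw [integral_Icc_eq_integral_Ioc, intervalIntegral.integral_of_le hT.le]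
    rw [this]
    have : 0 ≤ ‖u₀‖ := norm_nonneg _
    linarith
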